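/- For every real s, ∫₁^∞ u^{−s/2+1} θ(u) θ'(u) du = (1/4)(s−2) K₀(2−s) − (1/2)(θ(1)² − 1). -/

import Mathlib

open MeasureTheory Real Set Filter Asymptotics

/-- The Jacobi theta function `θ(u) = ∑_{n∈ℤ} e^{-πn²u}`. -/
noncomputable def jTheta (u : ℝ) : ℝ := ∑' n : ℤ, Real.exp (-Real.pi * (n : ℝ) ^ 2 * u)

noncomputable def jT' (u : ℝ) : ℝ := ∑' n : ℤ, (-π * (n : ℝ) ^ 2) * rexp (-π * (n : ℝ) ^ 2 * u)

lemma summ0 {u : ℝ} (hu : 0 < u) : Summable fun n : ℤ => rexp (-π * (n : ℝ) ^ 2 * u) := by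
  refine (HurwitzKernelBounds.summable_f_int 0 0 hu).congr fun n => ?_
  simp [HurwitzKernelBounds.f_int]

lemma summ2 {u : ℝ} (hu : 0 < u) : Summable fun n : ℤ => π * (n : ℝ) ^ 2 * rexp (-π * (n : ℝ) ^ 2 * u) := by
  have := (HurwitzKernelBounds.summable_f_int 2 0 hu).mul_left π
  refine this.congr fun n => ?_
  simp [HurwitzKernelBounds.f_int, sq_abs]
  ring

lemma term_hasDerivAt (n : ℤ) (y : ℝ) :
    HasDerivAt (fun z : ℝ => rexp (-π * (n : ℝ) ^ 2 * z))
      ((-π * (n : ℝ) ^ 2) * rexp (-π * (n : ℝ) ^ 2 * y)) y := by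
  have h := ((hasDerivAt_id y).const_mul (-π * (n : ℝ) ^ 2)).exp
  simp only [id_eq, mul_one] at h
  exact h.congr_deriv (mul_comm _ _)

lemma term_bound {n : ℤ} {y : ℝ} (hy : y ∈ Ioi (1/2 : ℝ)) :
    ‖(-π * (n : ℝ) ^ 2) * rexp (-π * (n : ℝ) ^ 2 * y)‖
      ≤ π * (n : ℝ) ^ 2 * rexp (-π * (n : ℝ) ^ 2 * (1/2)) := by
  have h1 : (0:ℝ) ≤ π * (n : ℝ) ^ 2 := by positivity
  rw [norm_mul, Real.norm_eq_abs, Real.norm_eq_abs,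
    (by ring : -π * (n:ℝ)^2 = -(π * (n:ℝ)^2)), abs_neg, abs_of_nonneg h1, abs_exp]
  refine mul_le_mul_of_nonneg_left (exp_le_exp.mpr ?_) h1
  have : (1/2 : ℝ) ≤ y := le_of_lt hy
  nlinarith [sq_nonneg ((n:ℝ)), pi_pos]

lemma hasDerivAt_jTheta {u : ℝ} (hu : 1/2 < u) : HasDerivAt jTheta (jT' u) u := by
  apply hasDerivAt_tsum_of_isPreconnected (summ2 (by norm_num : (0:ℝ) < 1/2))
    isOpen_Ioi isPreconnected_Ioi (fun n y _ => term_hasDerivAt n y)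
    (fun n y hy => term_bound hy) (by norm_num : (1:ℝ) ∈ Ioi (1/2:ℝ))
    (summ0 one_pos) hu

lemma jTheta_ge_one {u : ℝ} (hu : 0 < u) : 1 ≤ jTheta u := by
  have h := Summable.le_tsum (summ0 hu) 0 (fun j _ => (exp_pos _).le)
  rw [jTheta]
  simpa using h

lemma jTheta_anti {u v : ℝ} (hv : 0 < v) (huv : v ≤ u) : jTheta u ≤ jTheta v := by
  refine Summable.tsum_le_tsum (fun n => exp_le_exp.mpr ?_) (summ0 (hv.trans_le huv)) (summ0 hv)
  nlinarith [mul_nonneg (mul_nonneg pi_pos.le (sq_nonneg ((n:ℝ)))) (sub_nonneg.mpr huv)]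

lemma jTheta_sub_one_le {u : ℝ} (hu : 0 < u) :
    jTheta u - 1 ≤ rexp (-π * u / 2) * (jTheta (u / 2) - 1) := by
  classical
  have hs := summ0 hu
  have h2 := summ0 (half_pos hu)
  have e1 : jTheta u = 1 + ∑' n : ℤ, ite (n = 0) 0 (rexp (-π * (n:ℝ)^2 * u)) := by
    rw [jTheta, Summable.tsum_eq_add_tsum_ite hs 0]
    norm_num
  have e2 : jTheta (u/2) = 1 + ∑' n : ℤ, ite (n = 0) 0 (rexp (-π * (n:ℝ)^2 * (u/2))) := by
    rw [jTheta, Summable.tsum_eq_add_tsum_ite h2 0]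
    norm_num
  rw [e1, e2, add_sub_cancel_left, add_sub_cancel_left, ← tsum_mul_left]
  refine Summable.tsum_le_tsum (fun n => ?_)
    (Summable.of_nonneg_of_le
      (fun n => by split_ifs <;> first | positivity | simp)
      (fun n => by split_ifs with h; · positivity
                   · exact le_rfl) hs)
    (Summable.of_nonneg_of_le
      (fun n => by split_ifs <;> first | positivity | simp)
      (fun n => by split_ifs with h
                   · simp only [mul_zero]; positivity
                   · exact le_rfl) (h2.mul_left (rexp (-π * u / 2))))
  rcases eq_or_ne n 0 with rfl | hn
  · simp
  · simp only [hn, if_neg hn, if_false]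
    rw [← exp_add]
    apply exp_le_exp.mpr
    have h1 : (1:ℝ) ≤ (n:ℝ)^2 := by
      have h0 : (1:ℤ) ≤ |n| := Int.one_le_abs hn
      have : (1:ℤ) ≤ n^2 := by nlinarith [sq_abs n]
      exact_mod_cast this
    nlinarith [mul_nonneg (mul_nonneg pi_pos.le hu.le) (sub_nonneg.mpr h1)]

lemma summable_ite {u : ℝ} (hu : 0 < u) :
    Summable (fun n : ℤ => if n = 0 then (0:ℝ) else rexp (-π * (n:ℝ)^2 * u)) :=
  Summable.of_nonneg_of_le (fun n => by split_ifs <;> first | positivity | simp)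
    (fun n => by split_ifs with h
                 · positivity
                 · exact le_rfl) (summ0 hu)

lemma jTsum_ite {u : ℝ} (hu : 0 < u) :
    ∑' n : ℤ, (if n = 0 then (0:ℝ) else rexp (-π * (n:ℝ)^2 * u)) = jTheta u - 1 := by
  rw [jTheta, Summable.tsum_eq_add_tsum_ite (summ0 hu) 0]
  norm_num

lemma norm_term_eq (n : ℤ) (u : ℝ) :
    ‖(-π * (n:ℝ)^2) * rexp (-π * (n:ℝ)^2 * u)‖ = π * (n:ℝ)^2 * rexp (-π * (n:ℝ)^2 * u) := by
  rw [norm_mul, Real.norm_eq_abs, Real.norm_eq_abs, abs_exp, abs_mul, abs_neg,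
    abs_of_nonneg pi_pos.le, abs_of_nonneg (sq_nonneg _)]

lemma jT'_bound {u : ℝ} (hu : 1 ≤ u) : |jT' u| ≤ π * (jTheta (u/2) - 1) := by
  have hu0 : (0:ℝ) < u := lt_of_lt_of_le one_pos hu
  have hs2 := summ2 hu0
  have hs2' : Summable fun n : ℤ => ‖(-π * (n:ℝ)^2) * rexp (-π * (n:ℝ)^2 * u)‖ :=
    hs2.congr fun n => (norm_term_eq n u).symm
  have h1 : |jT' u| ≤ ∑' n : ℤ, ‖(-π * (n:ℝ)^2) * rexp (-π * (n:ℝ)^2 * u)‖ :=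
    norm_tsum_le_tsum_norm hs2'
  refine h1.trans ?_
  have h2 : ∑' n : ℤ, ‖(-π * (n:ℝ)^2) * rexp (-π * (n:ℝ)^2 * u)‖
      ≤ ∑' n : ℤ, π * (if n = 0 then (0:ℝ) else rexp (-π * (n:ℝ)^2 * (u/2))) := by
    refine Summable.tsum_le_tsum (fun n => ?_) hs2' ((summable_ite (half_pos hu0)).mul_left π)
    rw [norm_term_eq]
    rcases eq_or_ne n 0 with rfl | hn
    · simp
    · rw [if_neg hn]
      have hn2 : (1:ℝ) ≤ (n:ℝ)^2 := by
        have h0 : (1:ℤ) ≤ |n| := Int.one_le_abs hn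
        have : (1:ℤ) ≤ n^2 := by nlinarith [sq_abs n]
        exact_mod_cast this
      have key : (n:ℝ)^2 * rexp (-π * (n:ℝ)^2 * u) ≤ rexp (-π * (n:ℝ)^2 * (u/2)) := by
        have e1 : (n:ℝ)^2 ≤ rexp (π * (n:ℝ)^2 * (u/2)) := by
          refine le_trans (by linarith [add_one_le_exp ((n:ℝ)^2)]) (exp_le_exp.mpr ?_)
          have h3 : (3:ℝ) ≤ π * u := by nlinarith [pi_gt_three]
          nlinarith [mul_le_mul_of_nonneg_left h3 (sq_nonneg ((n:ℝ)))]
        calc (n:ℝ)^2 * rexp (-π * (n:ℝ)^2 * u)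
            ≤ rexp (π * (n:ℝ)^2 * (u/2)) * rexp (-π * (n:ℝ)^2 * u) :=
              mul_le_mul_of_nonneg_right e1 (exp_pos _).le
          _ = rexp (-π * (n:ℝ)^2 * (u/2)) := by rw [← exp_add]; ring_nf
      calc π * (n:ℝ)^2 * rexp (-π * (n:ℝ)^2 * u)
          = π * ((n:ℝ)^2 * rexp (-π * (n:ℝ)^2 * u)) := by ring
        _ ≤ π * rexp (-π * (n:ℝ)^2 * (u/2)) := mul_le_mul_of_nonneg_left key pi_pos.le
  refine h2.trans ?_
  rw [tsum_mul_left, jTsum_ite (half_pos hu0)]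

lemma jTheta_decay {u : ℝ} (hu : 1 ≤ u) :
    jTheta u - 1 ≤ (jTheta (1/2) - 1) * rexp (-π * u / 2) := by
  have hu0 : (0:ℝ) < u := lt_of_lt_of_le one_pos hu
  calc jTheta u - 1 ≤ rexp (-π * u / 2) * (jTheta (u/2) - 1) := jTheta_sub_one_le hu0
    _ ≤ rexp (-π * u / 2) * (jTheta (1/2) - 1) := by
        have := jTheta_anti (by norm_num : (0:ℝ) < 1/2) (by linarith : (1:ℝ)/2 ≤ u/2)
        exact mul_le_mul_of_nonneg_left (by linarith) (exp_pos _).le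
    _ = (jTheta (1/2) - 1) * rexp (-π * u / 2) := mul_comm _ _

lemma jT'_decay {u : ℝ} (hu : 1 ≤ u) :
    |jT' u| ≤ π * (jTheta (1/4) - 1) * rexp (-π * u / 4) := by
  have hu0 : (0:ℝ) < u := lt_of_lt_of_le one_pos hu
  refine (jT'_bound hu).trans ?_
  have h1 := jTheta_sub_one_le (half_pos hu0)
  have e : u / 2 / 2 = u / 4 := by ring
  rw [e] at h1
  have h2 : jTheta (u/4) - 1 ≤ jTheta (1/4) - 1 := by
    have := jTheta_anti (by norm_num : (0:ℝ) < 1/4) (by linarith : (1:ℝ)/4 ≤ u/4)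
    linarith
  have h3 : (0:ℝ) ≤ rexp (-π * (u/2) / 2) := (exp_pos _).le
  have h4 : jTheta (u/2) - 1 ≤ (jTheta (1/4) - 1) * rexp (-π * u / 4) := by
    have e2 : -π * (u/2) / 2 = -π * u / 4 := by ring
    rw [e2] at h1 h3
    nlinarith
  calc π * (jTheta (u/2) - 1) ≤ π * ((jTheta (1/4) - 1) * rexp (-π * u / 4)) :=
        mul_le_mul_of_nonneg_left h4 pi_pos.le
    _ = π * (jTheta (1/4) - 1) * rexp (-π * u / 4) := by ring

lemma sq_decay {u : ℝ} (hu : 1 ≤ u) :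
    |jTheta u ^ 2 - 1| ≤ (jTheta 1 + 1) * (jTheta (1/2) - 1) * rexp (-π * u / 2) := by
  have hu0 : (0:ℝ) < u := lt_of_lt_of_le one_pos hu
  have h1 : 1 ≤ jTheta u := jTheta_ge_one hu0
  have h2 : jTheta u ≤ jTheta 1 := jTheta_anti one_pos hu
  have h3 := jTheta_decay hu
  have h5 : 1 ≤ jTheta (1/2) := jTheta_ge_one (by norm_num)
  have h6 : (0:ℝ) < rexp (-π * u / 2) := exp_pos _
  rw [abs_of_nonneg (by nlinarith)]
  nlinarith [mul_le_mul h3 (by linarith : jTheta u + 1 ≤ jTheta 1 + 1) (by linarith) (by nlinarith)]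

lemma isBigO_sq (c : ℝ) :
    (fun u : ℝ => u ^ c * (jTheta u ^ 2 - 1)) =O[atTop] fun u => rexp (-(1/2) * u) := by
  have h1 : (fun u : ℝ => jTheta u ^ 2 - 1) =O[atTop] fun u => rexp (-(π/2) * u) := by
    rw [isBigO_iff]
    refine ⟨(jTheta 1 + 1) * (jTheta (1/2) - 1), ?_⟩
    filter_upwards [eventually_ge_atTop (1:ℝ)] with u hu
    have := sq_decay hu
    rw [Real.norm_eq_abs, Real.norm_eq_abs, abs_exp]
    have e : -(π/2) * u = -π * u / 2 := by ring
    rw [e]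
    exact this
  have h2 : (fun u : ℝ => u ^ c) =O[atTop] fun u => rexp ((π/2 - 1/2) * u) :=
    (isLittleO_rpow_exp_pos_mul_atTop c (by linarith [pi_gt_three])).isBigO
  have h3 := h2.mul h1
  have e : (fun u : ℝ => rexp ((π/2 - 1/2) * u) * rexp (-(π/2) * u))
      = fun u : ℝ => rexp (-(1/2) * u) := by
    funext u; rw [← exp_add]; ring_nf
  rwa [e] at h3

lemma isBigO_mixed (c : ℝ) :
    (fun u : ℝ => u ^ c * (jTheta u * jT' u)) =O[atTop] fun u => rexp (-(1/2) * u) := by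
  have h1 : (fun u : ℝ => jTheta u * jT' u) =O[atTop] fun u => rexp (-(π/4) * u) := by
    rw [isBigO_iff]
    refine ⟨jTheta 1 * (π * (jTheta (1/4) - 1)), ?_⟩
    filter_upwards [eventually_ge_atTop (1:ℝ)] with u hu
    have hu0 : (0:ℝ) < u := lt_of_lt_of_le one_pos hu
    have h2 := jT'_decay hu
    have h3 : 1 ≤ jTheta u := jTheta_ge_one hu0
    have h4 : jTheta u ≤ jTheta 1 := jTheta_anti one_pos hu
    rw [Real.norm_eq_abs, Real.norm_eq_abs, abs_exp, abs_mul]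
    have e : -(π/4) * u = -π * u / 4 := by ring
    rw [e]
    have h5 : |jTheta u| = jTheta u := abs_of_nonneg (by linarith)
    rw [h5]
    calc jTheta u * |jT' u| ≤ jTheta 1 * (π * (jTheta (1/4) - 1) * rexp (-π * u / 4)) := by
          apply mul_le_mul h4 h2 (abs_nonneg _) (by linarith [jTheta_ge_one one_pos])
      _ = jTheta 1 * (π * (jTheta (1/4) - 1)) * rexp (-π * u / 4) := by ring
  have h2 : (fun u : ℝ => u ^ c) =O[atTop] fun u => rexp ((π/4 - 1/2) * u) :=
    (isLittleO_rpow_exp_pos_mul_atTop c (by linarith [pi_gt_three])).isBigO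
  have h3 := h2.mul h1
  have e : (fun u : ℝ => rexp ((π/4 - 1/2) * u) * rexp (-(π/4) * u))
      = fun u : ℝ => rexp (-(1/2) * u) := by
    funext u; rw [← exp_add]; ring_nf
  rwa [e] at h3

lemma continuousOn_jTheta : ContinuousOn jTheta (Ici (1:ℝ)) := fun x hx =>
  ((hasDerivAt_jTheta (lt_of_lt_of_le (by norm_num) hx)).continuousAt).continuousWithinAt

lemma continuousOn_jT'2 : ContinuousOn jT' (Ici (1:ℝ)) := by
  have h : ContinuousOn (fun x : ℝ => ∑' n : ℤ, (-π * (n:ℝ)^2) * rexp (-π * (n:ℝ)^2 * x))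
      (Ioi (1/2:ℝ)) := by
    refine continuousOn_tsum (fun n => ?_) (summ2 (by norm_num : (0:ℝ) < 1/2))
      (fun n x hx => term_bound hx)
    fun_prop
  exact h.mono fun x hx => mem_Ioi.mpr (lt_of_lt_of_le one_half_lt_one hx)

lemma contOn_rpow (c : ℝ) : ContinuousOn (fun u : ℝ => u ^ c) (Ici (1:ℝ)) :=
  ContinuousOn.rpow_const continuousOn_id fun x hx =>
    Or.inl (ne_of_gt (lt_of_lt_of_le one_pos hx))

lemma int_sq (c : ℝ) : IntegrableOn (fun u : ℝ => u ^ c * (jTheta u ^ 2 - 1)) (Ioi (1:ℝ)) := by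
  refine integrable_of_isBigO_exp_neg (by norm_num : (0:ℝ) < 1/2)
    ((contOn_rpow c).mul ((continuousOn_jTheta.pow 2).sub continuousOn_const)) (isBigO_sq c)

lemma int_mixed (c : ℝ) :
    IntegrableOn (fun u : ℝ => u ^ c * (jTheta u * jT' u)) (Ioi (1:ℝ)) := by
  refine integrable_of_isBigO_exp_neg (by norm_num : (0:ℝ) < 1/2)
    ((contOn_rpow c).mul (continuousOn_jTheta.mul continuousOn_jT'2)) (isBigO_mixed c)

lemma tendsto_sq (c : ℝ) :
    Tendsto (fun u : ℝ => u ^ c * (jTheta u ^ 2 - 1)) atTop (nhds 0) := by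
  refine (isBigO_sq c).trans_tendsto ?_
  have h : Tendsto (fun u : ℝ => (1/2) * u) atTop atTop := by
    exact Tendsto.const_mul_atTop (by norm_num) tendsto_id
  have h2 := Real.tendsto_exp_neg_atTop_nhds_zero.comp h
  exact Tendsto.congr (fun u => by simp [Function.comp, neg_mul]) h2

/-- `K₀(s) = ∫₁^∞ u^{s/2-1}(θ(u)²-1) du`. -/
noncomputable def Kzero (s : ℝ) : ℝ :=
  ∫ u in Set.Ioi (1 : ℝ), u ^ (s / 2 - 1) * ((jTheta u) ^ 2 - 1)

/-- For every real `s`,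
`∫₁^∞ u^{-s/2+1} θ(u)θ'(u) du = (1/4)(s-2) K₀(2-s) - (1/2)(θ(1)²-1)`. -/
theorem J1_eval (s : ℝ) :
    (∫ u in Set.Ioi (1 : ℝ), u ^ (-s / 2 + 1) * (jTheta u * deriv jTheta u))
      = (1 / 4) * (s - 2) * Kzero (2 - s) - (1 / 2) * ((jTheta 1) ^ 2 - 1) := by
  set a : ℝ := -s / 2 + 1 with ha
  -- replace deriv jTheta by jT' inside the integral
  have hcongr : (∫ u in Set.Ioi (1 : ℝ), u ^ a * (jTheta u * deriv jTheta u))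
      = ∫ u in Set.Ioi (1 : ℝ), u ^ a * (jTheta u * jT' u) := by
    refine setIntegral_congr_fun measurableSet_Ioi fun u hu => ?_
    have : (1:ℝ)/2 < u := by have := mem_Ioi.mp hu; linarith
    rw [(hasDerivAt_jTheta this).deriv]
  set F : ℝ → ℝ := fun u => (1/2) * (u ^ a * (jTheta u ^ 2 - 1)) with hF
  set G : ℝ → ℝ := fun u =>
    (a/2) * (u ^ (a - 1) * (jTheta u ^ 2 - 1)) + u ^ a * (jTheta u * jT' u) with hG
  have hderiv : ∀ x ∈ Ioi (1:ℝ), HasDerivAt F (G x) x := by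
    intro x hx
    have hx1 : (1:ℝ) < x := mem_Ioi.mp hx
    have hx0 : (0:ℝ) < x := lt_trans one_pos hx1
    have hp : HasDerivAt (fun u : ℝ => u ^ a) (a * x ^ (a - 1)) x :=
      Real.hasDerivAt_rpow_const (Or.inl (ne_of_gt hx0))
    have hth := hasDerivAt_jTheta (show (1:ℝ)/2 < x by linarith)
    have hq : HasDerivAt (fun u : ℝ => jTheta u ^ 2 - 1) (2 * jTheta x * jT' x) x := by
      have h := (hth.pow 2).sub_const 1
      norm_num at h ⊢
      exact h
    have h : HasDerivAt (fun y : ℝ => 1 / 2 * (y ^ a * (jTheta y ^ 2 - 1)))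
        (1 / 2 * (a * x ^ (a - 1) * (jTheta x ^ 2 - 1) + x ^ a * (2 * jTheta x * jT' x))) x :=
      (hp.mul hq).const_mul (1/2 : ℝ)
    convert h using 1
    simp only [hG]
    ring
  have hcont : ContinuousWithinAt F (Ici (1:ℝ)) 1 := by
    have : ContinuousOn F (Ici (1:ℝ)) :=
      continuousOn_const.mul ((contOn_rpow a).mul
        ((continuousOn_jTheta.pow 2).sub continuousOn_const))
    exact this 1 self_mem_Ici
  have hint1 : IntegrableOn (fun u : ℝ => (a/2) * (u ^ (a-1) * (jTheta u ^ 2 - 1)))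
      (Ioi (1:ℝ)) := (int_sq (a-1)).const_mul (a/2)
  have hint : IntegrableOn G (Ioi (1:ℝ)) := hint1.add (int_mixed a)
  have htend : Tendsto F atTop (nhds 0) := by
    have h := (tendsto_sq a).const_mul (1/2 : ℝ)
    rw [hF]
    simpa using h
  have key := integral_Ioi_of_hasDerivAt_of_tendsto hcont hderiv hint htend
  have hsplit : (∫ x in Ioi (1:ℝ), G x)
      = (a/2) * (∫ u in Ioi (1:ℝ), u ^ (a-1) * (jTheta u ^ 2 - 1))
        + ∫ u in Ioi (1:ℝ), u ^ a * (jTheta u * jT' u) := by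
    rw [hG]
    rw [integral_add hint1 (int_mixed a), integral_const_mul]
  have hK : Kzero (2 - s) = ∫ u in Ioi (1:ℝ), u ^ (a-1) * (jTheta u ^ 2 - 1) := by
    rw [Kzero]
    congr 1
    funext u
    congr 1
    rw [show (2 - s) / 2 - 1 = a - 1 by rw [ha]; ring]
  have hF1 : F 1 = (1/2) * (jTheta 1 ^ 2 - 1) := by
    simp [hF, Real.one_rpow]
  rw [hcongr]
  rw [hsplit, hF1] at key
  rw [hK]
  have : (∫ u in Ioi (1:ℝ), u ^ a * (jTheta u * jT' u))
      = 0 - (1/2) * (jTheta 1 ^ 2 - 1)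
        - (a/2) * (∫ u in Ioi (1:ℝ), u ^ (a-1) * (jTheta u ^ 2 - 1)) := by linarith
  rw [this, ha]
  ring
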